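/- Let W : X → ℝ≥0 be a function with W(x̄)=0, let μ : X → U be a policy, and let x̃ be the trajectory x̃_{k+1} = f(x̃_k, μ(x̃_k)) from x̃_0 = x_0. Suppose W(x̃_k) → 0 as k → ∞ and for all k, W(x̃_{k+1}) − W(x̃_k) ≤ −c_k · l(x̃_k, μ(x̃_k)) with c_k ∈ (0, c̄]. Then ∑_{k=0}^∞ l(x̃_k, μ(x̃_k)) ≤ V^∞(x_0) + δ_0 − ∑_{k=0}^∞ (Δl)_k, where δ_0 = W(x_0) − V^∞(x_0) and (Δl)_k = (c_k − 1)·l(x̃_k, μ(x̃_k)). -/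
import Mathlib


theorem stmt0 {X U : Type*} (f : X → U → X) (l : X → U → ℝ)
    (hl : ∀ x u, 0 ≤ l x u)
    (W : X → ℝ) (hW : ∀ x, 0 ≤ W x)
    (μ : X → U) (x0 : X) (xt : ℕ → X)
    (hx0 : xt 0 = x0)
    (hstep : ∀ k, xt (k + 1) = f (xt k) (μ (xt k)))
    (Vinf : ℝ) (c : ℕ → ℝ) (cbar : ℝ)
    (hc : ∀ k, 0 < c k ∧ c k ≤ cbar)
    (hWlim : Filter.Tendsto (fun k => W (xt k)) Filter.atTop (nhds 0))
    (hdecay : ∀ k, W (xt (k + 1)) - W (xt k) ≤ -(c k * l (xt k) (μ (xt k))))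
    (hsum : Summable fun k => l (xt k) (μ (xt k)))
    (hsumΔ : Summable fun k => (c k - 1) * l (xt k) (μ (xt k))) :
    ∑' k, l (xt k) (μ (xt k)) ≤
      Vinf + (W x0 - Vinf) - ∑' k, (c k - 1) * l (xt k) (μ (xt k)) := by
  have hsumc : Summable fun k => c k * l (xt k) (μ (xt k)) := by
    have := hsumΔ.add hsum
    simpa [sub_mul, sub_add_cancel] using this
  have hkey : ∑' k, c k * l (xt k) (μ (xt k)) ≤ W x0 := by
    apply Summable.tsum_le_of_sum_range_le hsumc
    intro n
    have htel : ∀ n, ∑ k ∈ Finset.range n, c k * l (xt k) (μ (xt k))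
        ≤ W (xt 0) - W (xt n) := by
      intro n
      induction n with
      | zero => simp
      | succ n ih =>
        rw [Finset.sum_range_succ]
        have := hdecay n
        linarith
    have := htel n
    have := hW (xt n)
    rw [hx0] at htel
    linarith [htel n]
  have heq : ∑' k, (c k - 1) * l (xt k) (μ (xt k))
      = (∑' k, c k * l (xt k) (μ (xt k))) - ∑' k, l (xt k) (μ (xt k)) := by
    rw [← Summable.tsum_sub hsumc hsum]
    congr 1; ext k; ring
  rw [heq]
  linarith
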